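/- Let k ≥ 1, ℓ ≥ 1, 1 ≤ r ≤ ℓ, and let t ≥ 2 be even. Let C be the (ℓt/2)-blow-up of the k-th power of the cycle on 2k+2 vertices, with blow-up classes W_1, …, W_{2k+2}. Then C contains a spanning copy of the ℓ-blow-up of the k-path on (k+1)t vertices. Specifically, splitting each W_i into t/2 sets of size ℓ labelled u_i, u_{i+(2k+2)}, …, u_{i+(t/2−1)(2k+2)}, the sequence of blocks (u_1, u_2, …, u_{t(k+1)}) has the property that each block is an independent set of size ℓ in C and any two blocks u_i, u_j with 0 < j − i ≤ k induce a complete bipartite graph in C. -/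

import Mathlib

/-- The `ℓ`-blow-up of the `k`-path on `N/ℓ` blocks, in blow-up order. -/
def pathBlowup (k ℓ N : ℕ) : SimpleGraph (Fin N) where
  Adj i j := (i : ℕ) / ℓ ≠ (j : ℕ) / ℓ ∧
    ((((i : ℕ) / ℓ : ℕ) : ℤ) - (((j : ℕ) / ℓ : ℕ) : ℤ)).natAbs ≤ k
  symm := ⟨by
    intro i j h
    exact ⟨Ne.symm h.1, by have := h.2; omega⟩⟩
  loopless := ⟨by
    intro i h
    exact h.1 rfl⟩

/-- The `m`-th power of the cycle on `n` vertices. -/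
def cyclePow (m n : ℕ) : SimpleGraph (Fin n) where
  Adj i j := i ≠ j ∧
    ((((i : ℕ) : ℤ) - ((j : ℕ) : ℤ)).natAbs ≤ m ∨
      n ≤ (((i : ℕ) : ℤ) - ((j : ℕ) : ℤ)).natAbs + m)
  symm := ⟨by
    intro i j h
    exact ⟨Ne.symm h.1, by have := h.2; omega⟩⟩
  loopless := ⟨by
    intro i h
    exact h.1 rfl⟩


private lemma divmod_lemma {ℓ q p : ℕ} (hp : p < ℓ) :
    (q * ℓ + p) / ℓ = q ∧ (q * ℓ + p) % ℓ = p := by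
  have hl : 0 < ℓ := Nat.pos_of_ne_zero (by omega)
  constructor
  · rw [Nat.add_comm, Nat.add_mul_div_right _ _ hl, Nat.div_eq_of_lt hp]
    omega
  · rw [Nat.add_comm, Nat.add_mul_mod_self_right, Nat.mod_eq_of_lt hp]

theorem stmt17 (k ℓ r t₂ : ℕ) (hk : 1 ≤ k) (hl : 1 ≤ ℓ) (hr1 : 1 ≤ r) (hr2 : r ≤ ℓ)
    (ht : 1 ≤ t₂) :
    ∃ f : Fin (ℓ * ((k + 1) * (2 * t₂))) → Fin (2 * k + 2) × Fin (ℓ * t₂),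
      Function.Bijective f ∧
      (∀ i j, (pathBlowup k ℓ (ℓ * ((k + 1) * (2 * t₂)))).Adj i j →
        ((cyclePow k (2 * k + 2)).comap Prod.fst).Adj (f i) (f j)) ∧
      (∀ i j : Fin (ℓ * ((k + 1) * (2 * t₂))), i ≠ j → (i : ℕ) / ℓ = (j : ℕ) / ℓ →
        ¬((cyclePow k (2 * k + 2)).comap Prod.fst).Adj (f i) (f j)) := by
  classical
  have hn : 0 < 2 * k + 2 := by omega
  have hl' : 0 < ℓ := hl
  have hbound : ∀ i : Fin (ℓ * ((k + 1) * (2 * t₂))),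
      ((i : ℕ) / ℓ) / (2 * k + 2) * ℓ + (i : ℕ) % ℓ < ℓ * t₂ := by
    intro i
    have h0 : (i : ℕ) < ((2 * k + 2) * t₂) * ℓ := by
      calc (i : ℕ) < ℓ * ((k + 1) * (2 * t₂)) := i.isLt
        _ = ((2 * k + 2) * t₂) * ℓ := by ring
    have h1 : (i : ℕ) / ℓ < (2 * k + 2) * t₂ := by
      rw [Nat.div_lt_iff_lt_mul hl']; exact h0
    have h2 : ((i : ℕ) / ℓ) / (2 * k + 2) < t₂ := by
      rw [Nat.div_lt_iff_lt_mul hn]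
      calc (i : ℕ) / ℓ < (2 * k + 2) * t₂ := h1
        _ = t₂ * (2 * k + 2) := by ring
    have h3 : (i : ℕ) % ℓ < ℓ := Nat.mod_lt _ hl'
    calc ((i : ℕ) / ℓ) / (2 * k + 2) * ℓ + (i : ℕ) % ℓ
        < (((i : ℕ) / ℓ) / (2 * k + 2) + 1) * ℓ := by
          have he : (((i : ℕ) / ℓ) / (2 * k + 2) + 1) * ℓ
              = ((i : ℕ) / ℓ) / (2 * k + 2) * ℓ + ℓ := by ring
          rw [he]; omega
      _ ≤ t₂ * ℓ := Nat.mul_le_mul_right ℓ (by omega)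
      _ = ℓ * t₂ := by ring
  refine ⟨fun i => (⟨(i : ℕ) / ℓ % (2 * k + 2), Nat.mod_lt _ hn⟩,
    ⟨((i : ℕ) / ℓ) / (2 * k + 2) * ℓ + (i : ℕ) % ℓ, hbound i⟩), ?_, ?_, ?_⟩
  · -- bijective
    rw [Fintype.bijective_iff_injective_and_card]
    constructor
    · intro i j h
      simp only [Prod.mk.injEq, Fin.mk.injEq] at h
      obtain ⟨h1, h2⟩ := h
      have hpi : (i : ℕ) % ℓ < ℓ := Nat.mod_lt _ hl'
      have hpj : (j : ℕ) % ℓ < ℓ := Nat.mod_lt _ hl'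
      have di := divmod_lemma (ℓ := ℓ) (q := ((i : ℕ) / ℓ) / (2 * k + 2)) hpi
      have dj := divmod_lemma (ℓ := ℓ) (q := ((j : ℕ) / ℓ) / (2 * k + 2)) hpj
      have hq : ((i : ℕ) / ℓ) / (2 * k + 2) = ((j : ℕ) / ℓ) / (2 * k + 2) := by
        rw [← di.1, ← dj.1, h2]
      have hp : (i : ℕ) % ℓ = (j : ℕ) % ℓ := by
        rw [← di.2, ← dj.2, h2]
      have hb : (i : ℕ) / ℓ = (j : ℕ) / ℓ := by
        rw [← Nat.div_add_mod ((i : ℕ) / ℓ) (2 * k + 2),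
          ← Nat.div_add_mod ((j : ℕ) / ℓ) (2 * k + 2), hq, h1]
      apply Fin.ext
      rw [← Nat.div_add_mod (i : ℕ) ℓ, ← Nat.div_add_mod (j : ℕ) ℓ, hb, hp]
    · simp only [Fintype.card_fin, Fintype.card_prod]
      ring
  · -- adjacency preserved
    intro i j hadj
    obtain ⟨hne, hdist⟩ := hadj
    rw [SimpleGraph.comap_adj]
    set b := (i : ℕ) / ℓ with hbdef
    set b' := (j : ℕ) / ℓ with hb'def
    set A := b % (2 * k + 2) with hAdef
    set A' := b' % (2 * k + 2) with hA'def
    set Q := b / (2 * k + 2) with hQdef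
    set Q' := b' / (2 * k + 2) with hQ'def
    have d1 : (2 * k + 2) * Q + A = b := Nat.div_add_mod b (2 * k + 2)
    have d2 : (2 * k + 2) * Q' + A' = b' := Nat.div_add_mod b' (2 * k + 2)
    have hA : A < 2 * k + 2 := Nat.mod_lt _ hn
    have hA' : A' < 2 * k + 2 := Nat.mod_lt _ hn
    have d1' : ((2 : ℤ) * k + 2) * Q + A = b := by exact_mod_cast d1
    have d2' : ((2 : ℤ) * k + 2) * Q' + A' = b' := by exact_mod_cast d2
    have key : ((A' : ℤ) - A) - ((b' : ℤ) - b) = ((Q : ℤ) - Q') * (2 * k + 2) := by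
      linear_combination d2' - d1'
    have hDne : ((b : ℤ)) ≠ (b' : ℤ) := by exact_mod_cast fun h => hne (by exact_mod_cast h)
    have hm : (Q : ℤ) - Q' = -1 ∨ (Q : ℤ) - Q' = 0 ∨ (Q : ℤ) - Q' = 1 := by
      by_contra hc
      push_neg at hc
      have h2 : (Q : ℤ) - Q' ≤ -2 ∨ 2 ≤ (Q : ℤ) - Q' := by omega
      have hub : ((Q : ℤ) - Q') * (2 * k + 2) ≤ -2 * (2 * k + 2) ∨
          2 * (2 * k + 2) ≤ ((Q : ℤ) - Q') * (2 * k + 2) := by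
        rcases h2 with h | h
        · left; exact mul_le_mul_of_nonneg_right h (by positivity)
        · right
          have := mul_le_mul_of_nonneg_right h (show (0:ℤ) ≤ 2 * k + 2 by positivity)
          linarith
      have hEb : -((2 : ℤ) * k + 2) < (A' : ℤ) - A ∧ (A' : ℤ) - A < 2 * k + 2 := by
        constructor <;> [skip; skip] <;> push_cast <;> omega
      have hDb : -(k : ℤ) ≤ (b' : ℤ) - b ∧ (b' : ℤ) - b ≤ k := by
        constructor <;> omega
      rcases hub with h | h <;> linarith [key, hEb.1, hEb.2, hDb.1, hDb.2]
    have hkey2 : ∃ m : ℤ, (m = -1 ∨ m = 0 ∨ m = 1) ∧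
        ((A' : ℤ) - A) = ((b' : ℤ) - b) + m * (2 * k + 2) := by
      refine ⟨(Q : ℤ) - Q', hm, by linarith [key]⟩
    obtain ⟨m, hm3, hkey⟩ := hkey2
    constructor
    · -- first coordinates differ
      intro hEq
      have : A = A' := by
        have := congrArg Fin.val hEq
        simpa using this
      rcases hm3 with h | h | h <;> rw [h] at hkey <;> omega
    · -- distance condition
      show (((A : ℕ) : ℤ) - ((A' : ℕ) : ℤ)).natAbs ≤ k ∨
        (2 * k + 2 : ℕ) ≤ (((A : ℕ) : ℤ) - ((A' : ℕ) : ℤ)).natAbs + k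
      rcases hm3 with h | h | h <;> rw [h] at hkey <;> push_cast <;> omega
  · -- independence within blocks
    intro i j hne hblk hadj
    rw [SimpleGraph.comap_adj] at hadj
    exact hadj.1 (Fin.ext (by simp [hblk]))
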